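/- arXiv:2006.01083 — 2 statements merged into one kernel-verified Lean document; each statement's English description precedes it below -/
import Mathlib

section
/- Let (X, F, μ) and (Y, G, ν) be σ-finite measure spaces and let ρ_⊗ be the iterated functional ρ_⊗(F) := ρ_Y( y ↦ ρ_X(F(·,y)) ) defined for measurable F : X × Y → [0,∞]. Then for every measurable F : X × Y → ℂ, (1/16) · ‖F‖_{𝓗(μ⊗ν)} ≤ ρ_⊗(|F|) ≤ ‖F‖_{𝓗(μ⊗ν)}, where 𝓗(μ⊗ν) is the sum space L¹ + L^∞ + L^{1,∞} + L^{∞,1} formed with X as the first factor and Y as the second factor of the product. -/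
open MeasureTheory ENNReal Filter

noncomputable section

/-- `L^p` norm (in `[0,∞]`) of an `ℝ≥0∞`-valued function. -/
def lpNormENN {α : Type*} [MeasurableSpace α] (μ : Measure α) (p : ℝ≥0∞)
    (f : α → ℝ≥0∞) : ℝ≥0∞ :=
  if p = ∞ then essSup f μ else (∫⁻ a, f a ^ p.toReal ∂μ) ^ (1 / p.toReal)

/-- Mixed `L^{p,q}` norm of an `ℝ≥0∞`-valued function on a product space. -/
def mixedNormENN {α β : Type*} [MeasurableSpace α] [MeasurableSpace β]
    (μ₁ : Measure α) (μ₂ : Measure β) (p q : ℝ≥0∞) (f : α × β → ℝ≥0∞) : ℝ≥0∞ :=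
  lpNormENN μ₂ q fun x₂ => lpNormENN μ₁ p fun x₁ => f (x₁, x₂)

/-- Mixed `L^{p,q}` norm of a complex-valued function on a product space. -/
def mixedNorm {α β : Type*} [MeasurableSpace α] [MeasurableSpace β]
    (μ₁ : Measure α) (μ₂ : Measure β) (p q : ℝ≥0∞) (f : α × β → ℂ) : ℝ≥0∞ :=
  mixedNormENN μ₁ μ₂ p q fun x => (‖f x‖₊ : ℝ≥0∞)

/-- The Schur constant `C₁(K)`. -/
def schurC1 {X Y : Type*} [MeasurableSpace X] [MeasurableSpace Y]
    (μ : Measure X) (ν : Measure Y) (K : X × Y → ℝ≥0∞) : ℝ≥0∞ :=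
  essSup (fun x => ∫⁻ y, K (x, y) ∂ν) μ

/-- The Schur constant `C₂(K)`. -/
def schurC2 {X Y : Type*} [MeasurableSpace X] [MeasurableSpace Y]
    (μ : Measure X) (ν : Measure Y) (K : X × Y → ℝ≥0∞) : ℝ≥0∞ :=
  essSup (fun y => ∫⁻ x, K (x, y) ∂μ) ν

/-- The Schur constant `C₃(K)`. -/
def schurC3 {X₁ X₂ Y₁ Y₂ : Type*} [MeasurableSpace X₁] [MeasurableSpace X₂]
    [MeasurableSpace Y₁] [MeasurableSpace Y₂]
    (μ₁ : Measure X₁) (μ₂ : Measure X₂) (ν₁ : Measure Y₁) (ν₂ : Measure Y₂)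
    (K : (X₁ × X₂) × (Y₁ × Y₂) → ℝ≥0∞) : ℝ≥0∞ :=
  essSup (fun x₂ =>
    ∫⁻ y₂, essSup (fun y₁ => ∫⁻ x₁, K ((x₁, x₂), (y₁, y₂)) ∂μ₁) ν₁ ∂ν₂) μ₂

/-- The Schur constant `C₄(K)`. -/
def schurC4 {X₁ X₂ Y₁ Y₂ : Type*} [MeasurableSpace X₁] [MeasurableSpace X₂]
    [MeasurableSpace Y₁] [MeasurableSpace Y₂]
    (μ₁ : Measure X₁) (μ₂ : Measure X₂) (ν₁ : Measure Y₁) (ν₂ : Measure Y₂)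
    (K : (X₁ × X₂) × (Y₁ × Y₂) → ℝ≥0∞) : ℝ≥0∞ :=
  essSup (fun y₂ =>
    ∫⁻ x₂, essSup (fun x₁ => ∫⁻ y₁, K ((x₁, x₂), (y₁, y₂)) ∂ν₁) μ₁ ∂μ₂) ν₂

/-- The kernel norm `‖K‖_{𝒜(U,V)}`. -/
def normA {U V : Type*} [MeasurableSpace U] [MeasurableSpace V]
    (lam : Measure U) (kap : Measure V) (K : U × V → ℝ≥0∞) : ℝ≥0∞ :=
  max (essSup (fun u => ∫⁻ v, K (u, v) ∂kap) lam)
      (essSup (fun v => ∫⁻ u, K (u, v) ∂lam) kap)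

/-- The kernel norm `‖K‖_{𝓑(X,Y)}` for an `ℝ≥0∞`-valued kernel. -/
def normB {X₁ X₂ Y₁ Y₂ : Type*} [MeasurableSpace X₁] [MeasurableSpace X₂]
    [MeasurableSpace Y₁] [MeasurableSpace Y₂]
    (μ₁ : Measure X₁) (μ₂ : Measure X₂) (ν₁ : Measure Y₁) (ν₂ : Measure Y₂)
    (K : (X₁ × X₂) × (Y₁ × Y₂) → ℝ≥0∞) : ℝ≥0∞ :=
  normA μ₂ ν₂ fun s => normA μ₁ ν₁ fun t => K ((t.1, s.1), (t.2, s.2))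

/-- The weighted kernel norm `‖K‖_{𝓑_m(X,Y)}` for an `ℝ≥0∞`-valued kernel. -/
def normBmENN {X₁ X₂ Y₁ Y₂ : Type*} [MeasurableSpace X₁] [MeasurableSpace X₂]
    [MeasurableSpace Y₁] [MeasurableSpace Y₂]
    (μ₁ : Measure X₁) (μ₂ : Measure X₂) (ν₁ : Measure Y₁) (ν₂ : Measure Y₂)
    (m : (X₁ × X₂) × (Y₁ × Y₂) → ℝ) (K : (X₁ × X₂) × (Y₁ × Y₂) → ℝ≥0∞) : ℝ≥0∞ :=
  normB μ₁ μ₂ ν₁ ν₂ fun z => ENNReal.ofReal (m z) * K z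

/-- The weighted kernel norm `‖K‖_{𝓑_m(X,Y)}` for a complex-valued kernel. -/
def normBm {X₁ X₂ Y₁ Y₂ : Type*} [MeasurableSpace X₁] [MeasurableSpace X₂]
    [MeasurableSpace Y₁] [MeasurableSpace Y₂]
    (μ₁ : Measure X₁) (μ₂ : Measure X₂) (ν₁ : Measure Y₁) (ν₂ : Measure Y₂)
    (m : (X₁ × X₂) × (Y₁ × Y₂) → ℝ) (K : (X₁ × X₂) × (Y₁ × Y₂) → ℂ) : ℝ≥0∞ :=
  normBmENN μ₁ μ₂ ν₁ ν₂ m fun z => (‖K z‖₊ : ℝ≥0∞)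

/-- The norm of the space `𝒢 = L¹ ∩ L^∞ ∩ L^{1,∞} ∩ L^{∞,1}`. -/
def Gnorm {α β : Type*} [MeasurableSpace α] [MeasurableSpace β]
    (μ₁ : Measure α) (μ₂ : Measure β) (f : α × β → ℂ) : ℝ≥0∞ :=
  max (max (eLpNorm f 1 (μ₁.prod μ₂)) (eLpNorm f ∞ (μ₁.prod μ₂)))
      (max (mixedNorm μ₁ μ₂ 1 ∞ f) (mixedNorm μ₁ μ₂ ∞ 1 f))

/-- The norm of the sum space `𝓗 = L¹ + L^∞ + L^{1,∞} + L^{∞,1}`. -/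
def Hnorm {α β : Type*} [MeasurableSpace α] [MeasurableSpace β]
    (μ₁ : Measure α) (μ₂ : Measure β) (f : α × β → ℂ) : ℝ≥0∞ :=
  ⨅ (g : (α × β → ℂ) × (α × β → ℂ) × (α × β → ℂ) × (α × β → ℂ))
    (_ : Measurable g.1 ∧ Measurable g.2.1 ∧ Measurable g.2.2.1 ∧ Measurable g.2.2.2 ∧
      f = g.1 + g.2.1 + g.2.2.1 + g.2.2.2),
    eLpNorm g.1 1 (μ₁.prod μ₂) + eLpNorm g.2.1 ∞ (μ₁.prod μ₂) +
      mixedNorm μ₁ μ₂ 1 ∞ g.2.2.1 + mixedNorm μ₁ μ₂ ∞ 1 g.2.2.2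

/-- The functional `ρ(f) = inf { ‖g‖_∞ + ‖h‖_1 : f = g + h }`. -/
def rho {α : Type*} [MeasurableSpace α] (μ : Measure α) (f : α → ℝ≥0∞) : ℝ≥0∞ :=
  ⨅ (gh : (α → ℝ≥0∞) × (α → ℝ≥0∞))
    (_ : Measurable gh.1 ∧ Measurable gh.2 ∧ f = gh.1 + gh.2),
    essSup gh.1 μ + ∫⁻ x, gh.2 x ∂μ


section Helpers

variable {α : Type*} [MeasurableSpace α] {μ : Measure α}

lemma min_add_tsub_self (a b : ℝ≥0∞) : min a b + (a - b) = a := by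
  rcases le_total a b with h | h
  · simp [min_eq_left h, tsub_eq_zero_of_le h]
  · rw [min_eq_right h, add_tsub_cancel_of_le h]

lemma lpNormENN_one (μ : Measure α) (g : α → ℝ≥0∞) : lpNormENN μ 1 g = ∫⁻ x, g x ∂μ := by
  simp [lpNormENN]

lemma lpNormENN_top (μ : Measure α) (g : α → ℝ≥0∞) : lpNormENN μ ∞ g = essSup g μ := by
  simp [lpNormENN]

lemma rho_le_of_decomp {f g h : α → ℝ≥0∞} (hg : Measurable g) (hh : Measurable h)
    (hfgh : f = g + h) : rho μ f ≤ essSup g μ + ∫⁻ x, h x ∂μ :=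
  iInf_le_of_le (g, h) (iInf_le_of_le ⟨hg, hh, hfgh⟩ le_rfl)

lemma rho_le_threshold {f : α → ℝ≥0∞} (hf : Measurable f) (t : ℝ≥0∞) :
    rho μ f ≤ t + ∫⁻ x, f x - t ∂μ := by
  refine le_trans (rho_le_of_decomp (f := f) (g := fun x => min (f x) t)
      (h := fun x => f x - t) (hf.min measurable_const) (hf.sub measurable_const) ?_) ?_
  · funext x
    simp [min_add_tsub_self]
  · exact add_le_add_left
      (essSup_le_of_ae_le t (Eventually.of_forall fun x => min_le_right _ _)) _

lemma lintegral_tsub_le_of_rho_lt {f : α → ℝ≥0∞} {r : ℝ≥0∞} (h : rho μ f < r) :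
    ∫⁻ x, f x - r ∂μ ≤ r := by
  rw [rho] at h
  simp only [iInf_lt_iff] at h
  obtain ⟨⟨g, h'⟩, ⟨hg, hh, hf⟩, hlt⟩ := h
  have hS : essSup g μ ≤ r := le_trans le_self_add hlt.le
  have hI : ∫⁻ x, h' x ∂μ ≤ r := le_trans le_add_self hlt.le
  refine le_trans (lintegral_mono_ae ?_) hI
  filter_upwards [ae_le_essSup g] with x hx
  refine tsub_le_iff_left.mpr ?_
  have : f x = g x + h' x := by rw [hf]; rfl
  rw [this]
  exact add_le_add (hx.trans hS) le_rfl

lemma rho_eq_iInf_rat {f : α → ℝ≥0∞} (hf : Measurable f) :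
    rho μ f = ⨅ q : ℚ, (ENNReal.ofReal q + ∫⁻ x, f x - ENNReal.ofReal q ∂μ) := by
  apply le_antisymm
  · exact le_iInf fun q => rho_le_threshold hf _
  · rw [rho]
    refine le_iInf fun gh => le_iInf fun hp => ?_
    obtain ⟨hg, hh, hfe⟩ := hp
    refine ENNReal.le_of_forall_pos_le_add fun ε hε hb => ?_
    have hS : essSup gh.1 μ ≠ ∞ := ne_top_of_lt (lt_of_le_of_lt le_self_add hb)
    obtain ⟨q, hq1, hq2⟩ := exists_rat_btwn
      (lt_add_of_pos_right (essSup gh.1 μ).toReal (by exact_mod_cast hε : (0:ℝ) < (ε:ℝ)))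
    have hq0 : essSup gh.1 μ ≤ ENNReal.ofReal q := by
      rw [← ENNReal.ofReal_toReal hS]
      exact ENNReal.ofReal_le_ofReal hq1.le
    have hqle : ENNReal.ofReal q ≤ essSup gh.1 μ + ε := by
      calc ENNReal.ofReal q ≤ ENNReal.ofReal ((essSup gh.1 μ).toReal + (ε:ℝ)) :=
            ENNReal.ofReal_le_ofReal hq2.le
        _ = ENNReal.ofReal (essSup gh.1 μ).toReal + ENNReal.ofReal (ε:ℝ) :=
            ENNReal.ofReal_add ENNReal.toReal_nonneg ε.coe_nonneg
        _ ≤ essSup gh.1 μ + ε := by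
            rw [ENNReal.ofReal_toReal hS, ENNReal.ofReal_coe_nnreal]
    refine le_trans (iInf_le _ q) ?_
    have hint : ∫⁻ x, f x - ENNReal.ofReal q ∂μ ≤ ∫⁻ x, gh.2 x ∂μ := by
      refine lintegral_mono_ae ?_
      filter_upwards [ae_le_essSup gh.1] with x hx
      refine tsub_le_iff_left.mpr ?_
      have : f x = gh.1 x + gh.2 x := by rw [hfe]; rfl
      rw [this]
      exact add_le_add (hx.trans hq0) le_rfl
    calc ENNReal.ofReal q + ∫⁻ x, f x - ENNReal.ofReal q ∂μ
        ≤ (essSup gh.1 μ + ε) + ∫⁻ x, gh.2 x ∂μ := add_le_add hqle hint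
      _ = essSup gh.1 μ + ∫⁻ x, gh.2 x ∂μ + ε := by ring

lemma measurable_rho_left {X Y : Type*} [MeasurableSpace X] [MeasurableSpace Y]
    (μ : Measure X) [SigmaFinite μ] {A : X × Y → ℝ≥0∞} (hA : Measurable A) :
    Measurable fun y => rho μ fun x => A (x, y) := by
  have heq : (fun y => rho μ fun x => A (x, y)) =
      fun y => ⨅ q : ℚ, (ENNReal.ofReal q + ∫⁻ x, A (x, y) - ENNReal.ofReal q ∂μ) := by
    funext y
    exact rho_eq_iInf_rat (hA.comp measurable_prodMk_right)
  rw [heq]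
  exact Measurable.iInf fun q =>
    measurable_const.add ((hA.sub measurable_const).lintegral_prod_left')

lemma ae_ae_of_ae_prod_swap {X Y : Type*} [MeasurableSpace X] [MeasurableSpace Y]
    {μ : Measure X} {ν : Measure Y} [SFinite μ] [SFinite ν] {P : X × Y → Prop}
    (hP : MeasurableSet {z : X × Y | P z}) (h : ∀ᵐ z ∂μ.prod ν, P z) :
    ∀ᵐ y ∂ν, ∀ᵐ x ∂μ, P (x, y) := by
  have h2 : ∀ᵐ w ∂(μ.prod ν).map Prod.swap, P (w.2, w.1) :=
    (MeasureTheory.ae_map_iff measurable_swap.aemeasurable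
      (measurable_swap hP : MeasurableSet {w : Y × X | P (w.2, w.1)})).2 h
  rw [Measure.prod_swap] at h2
  exact Measure.ae_ae_of_ae_prod h2

end Helpers

/-- The iterated functional `ρ_⊗` is equivalent to the norm of
`𝓗 = L¹ + L^∞ + L^{1,∞} + L^{∞,1}`
(Proposition `prop:IteratedFunctionNormEquivalentToSumNorm`). -/
theorem rho_tensor_equivalent_to_Hnorm
    {X Y : Type*} [MeasurableSpace X] [MeasurableSpace Y]
    (μ : Measure X) (ν : Measure Y) [SigmaFinite μ] [SigmaFinite ν]
    (F : X × Y → ℂ) (hF : Measurable F) :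
    (1 / 16 : ℝ≥0∞) * Hnorm μ ν F ≤
      rho ν (fun y => rho μ fun x => (‖F (x, y)‖₊ : ℝ≥0∞)) ∧
    rho ν (fun y => rho μ fun x => (‖F (x, y)‖₊ : ℝ≥0∞)) ≤ Hnorm μ ν F := by
  classical
  set A : X × Y → ℝ≥0∞ := fun z => (‖F z‖₊ : ℝ≥0∞) with hA_def
  have hA : Measurable A := hF.enorm
  set G : Y → ℝ≥0∞ := fun y => rho μ fun x => A (x, y) with hG_def
  have hG : Measurable G := measurable_rho_left μ hA
  have hupper : rho ν G ≤ Hnorm μ ν F := by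
    rw [Hnorm]
    refine le_iInf fun g4 => le_iInf fun hp => ?_
    obtain ⟨h1, h2, h3, h4, hsum⟩ := hp
    set S2 : Y → ℝ≥0∞ := fun y => essSup (fun x => (‖g4.2.1 (x, y)‖₊ : ℝ≥0∞)) μ with hS2
    set S4 : Y → ℝ≥0∞ := fun y => essSup (fun x => (‖g4.2.2.2 (x, y)‖₊ : ℝ≥0∞)) μ with hS4
    set I1 : Y → ℝ≥0∞ := fun y => ∫⁻ x, (‖g4.1 (x, y)‖₊ : ℝ≥0∞) ∂μ with hI1
    set I3 : Y → ℝ≥0∞ := fun y => ∫⁻ x, (‖g4.2.2.1 (x, y)‖₊ : ℝ≥0∞) ∂μ with hI3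
    set C2 := eLpNorm g4.2.1 ∞ (μ.prod ν) with hC2
    set C3 := mixedNorm μ ν 1 ∞ g4.2.2.1 with hC3
    have stepA : ∀ y, G y ≤ (S2 y + S4 y) + (I1 y + I3 y) := by
      intro y
      refine le_trans (rho_le_threshold (hA.comp measurable_prodMk_right) (S2 y + S4 y)) ?_
      refine add_le_add le_rfl ?_
      have hint : ∫⁻ x, A (x, y) - (S2 y + S4 y) ∂μ ≤
          ∫⁻ x, ((‖g4.1 (x, y)‖₊ : ℝ≥0∞) + (‖g4.2.2.1 (x, y)‖₊ : ℝ≥0∞)) ∂μ := by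
        refine lintegral_mono_ae ?_
        filter_upwards [ae_le_essSup (fun x => (‖g4.2.1 (x, y)‖₊ : ℝ≥0∞)),
          ae_le_essSup (fun x => (‖g4.2.2.2 (x, y)‖₊ : ℝ≥0∞))] with x hx2 hx4
        refine tsub_le_iff_left.mpr ?_
        have hFe : F (x, y) = g4.1 (x, y) + g4.2.1 (x, y) + g4.2.2.1 (x, y) + g4.2.2.2 (x, y) := by
          rw [hsum]; rfl
        have htri0 : ‖F (x, y)‖₊ ≤ ‖g4.1 (x, y)‖₊ + ‖g4.2.1 (x, y)‖₊ +
            ‖g4.2.2.1 (x, y)‖₊ + ‖g4.2.2.2 (x, y)‖₊ := by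
          rw [hFe]
          exact le_trans (nnnorm_add_le _ _)
            (add_le_add (le_trans (nnnorm_add_le _ _)
              (add_le_add (nnnorm_add_le _ _) le_rfl)) le_rfl)
        have htri : A (x, y) ≤ (‖g4.1 (x, y)‖₊ : ℝ≥0∞) + (‖g4.2.1 (x, y)‖₊ : ℝ≥0∞) +
            (‖g4.2.2.1 (x, y)‖₊ : ℝ≥0∞) + (‖g4.2.2.2 (x, y)‖₊ : ℝ≥0∞) := by
          rw [hA_def]
          dsimp only
          exact_mod_cast htri0
        calc A (x, y) ≤ (‖g4.1 (x, y)‖₊ : ℝ≥0∞) + (‖g4.2.1 (x, y)‖₊ : ℝ≥0∞) +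
              (‖g4.2.2.1 (x, y)‖₊ : ℝ≥0∞) + (‖g4.2.2.2 (x, y)‖₊ : ℝ≥0∞) := htri
          _ ≤ (‖g4.1 (x, y)‖₊ : ℝ≥0∞) + S2 y + (‖g4.2.2.1 (x, y)‖₊ : ℝ≥0∞) + S4 y := by
              gcongr
          _ = (S2 y + S4 y) + ((‖g4.1 (x, y)‖₊ : ℝ≥0∞) + (‖g4.2.2.1 (x, y)‖₊ : ℝ≥0∞)) := by
              ring
      refine hint.trans (le_of_eq ?_)
      exact lintegral_add_left (h1.comp measurable_prodMk_right).enorm _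
    have hae2 : ∀ᵐ y ∂ν, S2 y ≤ C2 := by
      have hprod : ∀ᵐ z ∂μ.prod ν, (‖g4.2.1 z‖₊ : ℝ≥0∞) ≤ C2 := by
        rw [hC2, eLpNorm_exponent_top, eLpNormEssSup]
        exact ENNReal.ae_le_essSup _
      have := ae_ae_of_ae_prod_swap (measurableSet_le h2.enorm measurable_const) hprod
      filter_upwards [this] with y hy
      exact essSup_le_of_ae_le _ hy
    have hae3 : ∀ᵐ y ∂ν, I3 y ≤ C3 := by
      have hC3' : C3 = essSup I3 ν := by
        rw [hC3, hI3]
        simp [mixedNorm, mixedNormENN, lpNormENN_one, lpNormENN_top]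
      rw [hC3']
      exact ENNReal.ae_le_essSup _
    have hint : ∫⁻ y, G y - (C2 + C3) ∂ν ≤ ∫⁻ y, (I1 y + S4 y) ∂ν := by
      refine lintegral_mono_ae ?_
      filter_upwards [hae2, hae3] with y hy2 hy3
      refine tsub_le_iff_left.mpr ?_
      calc G y ≤ (S2 y + S4 y) + (I1 y + I3 y) := stepA y
        _ ≤ (C2 + S4 y) + (I1 y + C3) := by gcongr
        _ = (C2 + C3) + (I1 y + S4 y) := by ring
    have hI1m : Measurable I1 := h1.enorm.lintegral_prod_left'
    have h14 : ∫⁻ y, (I1 y + S4 y) ∂ν =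
        eLpNorm g4.1 1 (μ.prod ν) + mixedNorm μ ν ∞ 1 g4.2.2.2 := by
      rw [lintegral_add_left hI1m]
      congr 1
      · rw [eLpNorm_one_eq_lintegral_enorm, lintegral_prod_symm _ h1.enorm.aemeasurable]; rfl
      · rw [hS4]
        simp [mixedNorm, mixedNormENN, lpNormENN_one, lpNormENN_top]
    calc rho ν G ≤ (C2 + C3) + ∫⁻ y, G y - (C2 + C3) ∂ν := rho_le_threshold hG _
      _ ≤ (C2 + C3) + (eLpNorm g4.1 1 (μ.prod ν) + mixedNorm μ ν ∞ 1 g4.2.2.2) :=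
          add_le_add le_rfl (hint.trans_eq h14)
      _ = eLpNorm g4.1 1 (μ.prod ν) + C2 + C3 + mixedNorm μ ν ∞ 1 g4.2.2.2 := by ring
  have hlower : (1 / 16 : ℝ≥0∞) * Hnorm μ ν F ≤ rho ν G := by
    by_cases hρ : rho ν G = ∞
    · rw [hρ]; exact le_top
    have key : ∀ ε : ℝ≥0∞, 0 < ε → ε ≠ ∞ → Hnorm μ ν F ≤ 6 * rho ν G + 9 * ε := by
      intro ε hε hεtop
      set T := rho ν G + ε with hTdef
      have hTtop : T ≠ ∞ := ENNReal.add_ne_top.mpr ⟨hρ, hεtop⟩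
      have hT0 : T ≠ 0 := by
        rw [hTdef]
        exact fun h => (ne_of_gt hε) (add_eq_zero.mp h).2
      have KO : ∫⁻ y, G y - T ∂ν ≤ T :=
        lintegral_tsub_le_of_rho_lt (ENNReal.lt_add_right hρ (ne_of_gt hε))
      have KI : ∀ y, ∫⁻ x, A (x, y) - (G y + ε) ∂μ ≤ G y + ε := by
        intro y
        by_cases hy : G y = ∞
        · rw [hy, top_add]; exact le_top
        · exact lintegral_tsub_le_of_rho_lt
            (show rho μ (fun x => A (x, y)) < G y + ε from
              ENNReal.lt_add_right hy (ne_of_gt hε))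
      set p1 : X × Y → ℝ≥0∞ := fun z => if G z.2 ≤ 2 * T then 0 else A z - (G z.2 + ε)
        with hp1
      set p2 : X × Y → ℝ≥0∞ := fun z => min (min (A z) (G z.2 + ε)) (T + ε) with hp2
      set p3 : X × Y → ℝ≥0∞ := fun z => if G z.2 ≤ 2 * T then A z - (G z.2 + ε) else 0
        with hp3
      set p4 : X × Y → ℝ≥0∞ := fun z => min (A z) (G z.2 + ε) - (T + ε) with hp4
      have hsetm : MeasurableSet {z : X × Y | G z.2 ≤ 2 * T} :=
        measurableSet_le (hG.comp measurable_snd) measurable_const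
      have htm : Measurable fun z : X × Y => G z.2 + ε :=
        (hG.comp measurable_snd).add measurable_const
      have hp1m : Measurable p1 := Measurable.ite hsetm measurable_const (hA.sub htm)
      have hp2m : Measurable p2 := (hA.min htm).min measurable_const
      have hp3m : Measurable p3 := Measurable.ite hsetm (hA.sub htm) measurable_const
      have hp4m : Measurable p4 := (hA.min htm).sub measurable_const
      have hle1 : ∀ z, p1 z ≤ A z := by
        intro z
        rw [hp1]
        dsimp only
        split_ifs
        · exact zero_le
        · exact tsub_le_self
      have hle2 : ∀ z, p2 z ≤ A z := fun z => (min_le_left _ _).trans (min_le_left _ _)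
      have hle3 : ∀ z, p3 z ≤ A z := by
        intro z
        rw [hp3]
        dsimp only
        split_ifs
        · exact tsub_le_self
        · exact zero_le
      have hle4 : ∀ z, p4 z ≤ A z := fun z => tsub_le_self.trans (min_le_left _ _)
      have hsum4 : ∀ z : X × Y, p1 z + p2 z + p3 z + p4 z = A z := by
        intro z
        have h24 : p2 z + p4 z = min (A z) (G z.2 + ε) := by
          rw [hp2, hp4]; exact min_add_tsub_self _ _
        have h13 : p1 z + p3 z = A z - (G z.2 + ε) := by
          rw [hp1, hp3]
          dsimp only
          by_cases h : G z.2 ≤ 2 * T <;> simp [h]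
        calc p1 z + p2 z + p3 z + p4 z = (p2 z + p4 z) + (p1 z + p3 z) := by ring
          _ = min (A z) (G z.2 + ε) + (A z - (G z.2 + ε)) := by rw [h24, h13]
          _ = A z := min_add_tsub_self _ _
      have hsetY : MeasurableSet {y : Y | G y ≤ 2 * T} := measurableSet_le hG measurable_const
      have hscompl : MeasurableSet {y : Y | ¬ G y ≤ 2 * T} := by
        simpa [Set.compl_setOf] using hsetY.compl
      have hnus : ν {y : Y | ¬ G y ≤ 2 * T} ≤ 1 := by
        have hsub : {y : Y | ¬ G y ≤ 2 * T} ⊆ {y : Y | T ≤ G y - T} := by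
          intro y hy
          simp only [Set.mem_setOf_eq, not_le] at hy
          have hTT : T + T ≤ G y := by
            calc T + T = 2 * T := (two_mul T).symm
              _ ≤ G y := hy.le
          exact ENNReal.le_sub_of_add_le_left hTtop hTT
        refine le_trans (measure_mono hsub) ?_
        have hmul : T * ν {y : Y | T ≤ G y - T} ≤ T * 1 := by
          rw [mul_one]
          exact le_trans (mul_meas_ge_le_lintegral₀ (hG.sub measurable_const).aemeasurable T) KO
        exact (ENNReal.mul_le_mul_iff_right hT0 hTtop).mp hmul
      have B1 : ∫⁻ y, ∫⁻ x, p1 (x, y) ∂μ ∂ν ≤ 2 * T + ε := by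
        have Ip1 : ∀ y, ∫⁻ x, p1 (x, y) ∂μ ≤ (if G y ≤ 2 * T then 0 else G y + ε) := by
          intro y
          by_cases h : G y ≤ 2 * T
          · simp [hp1, h]
          · simp only [hp1, h, if_false]
            simpa using KI y
        calc ∫⁻ y, ∫⁻ x, p1 (x, y) ∂μ ∂ν
            ≤ ∫⁻ y, (if G y ≤ 2 * T then 0 else G y + ε) ∂ν := lintegral_mono Ip1
          _ ≤ ∫⁻ y, (2 * (G y - T) + (if G y ≤ 2 * T then 0 else ε)) ∂ν := by
              refine lintegral_mono fun y => ?_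
              by_cases h : G y ≤ 2 * T
              · simp [h]
              · simp only [h, if_false]
                push_neg at h
                have hTT : T + T ≤ G y := by
                  calc T + T = 2 * T := (two_mul T).symm
                    _ ≤ G y := h.le
                have h1 : T ≤ G y - T := ENNReal.le_sub_of_add_le_left hTtop hTT
                have h2 : G y ≤ 2 * (G y - T) := by
                  calc G y ≤ (G y - T) + T := le_tsub_add
                    _ ≤ (G y - T) + (G y - T) := add_le_add le_rfl h1
                    _ = 2 * (G y - T) := (two_mul _).symm
                exact add_le_add h2 le_rfl
          _ = 2 * ∫⁻ y, (G y - T) ∂ν + ∫⁻ y, (if G y ≤ 2 * T then 0 else ε) ∂ν := by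
              rw [lintegral_add_left (show Measurable fun y => 2 * (G y - T) from measurable_const.mul (hG.sub measurable_const))]
              rw [lintegral_const_mul _ (show Measurable fun y => G y - T from hG.sub measurable_const)]
          _ ≤ 2 * T + ε := by
              refine add_le_add (mul_le_mul_right KO 2) ?_
              have hind : (fun y => if G y ≤ 2 * T then (0 : ℝ≥0∞) else ε) =
                  Set.indicator {y : Y | ¬ G y ≤ 2 * T} (fun _ => ε) := by
                funext y
                by_cases h : G y ≤ 2 * T
                · simp [Set.indicator_apply, Set.mem_setOf_eq, h]
                · simp [Set.indicator_apply, Set.mem_setOf_eq, h, lt_of_not_ge h]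
              rw [hind, lintegral_indicator hscompl, setLIntegral_const]
              calc ε * ν {y : Y | ¬ G y ≤ 2 * T} ≤ ε * 1 := mul_le_mul_right hnus ε
                _ = ε := mul_one ε
      have B2 : ∀ z : X × Y, p2 z ≤ T + ε := fun z => min_le_right _ _
      have B3 : ∀ y, ∫⁻ x, p3 (x, y) ∂μ ≤ 2 * T + ε := by
        intro y
        by_cases h : G y ≤ 2 * T
        · have hpt : ∀ x, p3 (x, y) = A (x, y) - (G y + ε) := by
            intro x; simp [hp3, h]
          rw [lintegral_congr hpt]
          exact (KI y).trans (add_le_add h le_rfl)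
        · have hpt : ∀ x, p3 (x, y) = 0 := by intro x; simp [hp3, h]
          rw [lintegral_congr hpt]
          simp
      have B4 : ∀ z : X × Y, p4 z ≤ G z.2 - T := by
        intro z
        calc p4 z ≤ (G z.2 + ε) - (T + ε) := by
              rw [hp4]; exact tsub_le_tsub_right (min_le_right _ _) _
          _ = G z.2 - T := by
              rw [add_comm T ε, tsub_add_eq_tsub_tsub, ENNReal.add_sub_cancel_right hεtop]
      have hfin' : ∀ (p : X × Y → ℝ≥0∞), (∀ z, p z ≤ A z) → ∀ z, p z ≠ ∞ := by
        intro p hp z hcon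
        have h3 : A z = ∞ := top_le_iff.mp (hcon ▸ hp z)
        rw [hA_def] at h3
        exact ENNReal.coe_ne_top h3
      have cfn : ∀ (p : X × Y → ℝ≥0∞), (∀ z, p z ≤ A z) →
          ∀ z, (‖(((p z).toReal / ‖F z‖ : ℝ) : ℂ) * F z‖₊ : ℝ≥0∞) = p z := by
        intro p hp z
        by_cases hz : F z = 0
        · have hA0 : A z = 0 := by rw [hA_def]; simp [hz]
          have hp0 : p z = 0 := le_antisymm (hA0 ▸ hp z) zero_le
          simp [hz, hp0]
        · have hn : ‖F z‖ ≠ 0 := norm_ne_zero_iff.mpr hz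
          have hnorm : ‖(((p z).toReal / ‖F z‖ : ℝ) : ℂ) * F z‖ = (p z).toReal := by
            rw [norm_mul, Complex.norm_real, Real.norm_eq_abs,
              abs_of_nonneg (div_nonneg ENNReal.toReal_nonneg (norm_nonneg _)),
              div_mul_cancel₀ _ hn]
          rw [← ENNReal.ofReal_coe_nnreal, coe_nnnorm, hnorm, ENNReal.ofReal_toReal (hfin' p hp z)]
      set q1 : X × Y → ℂ := fun z => (((p1 z).toReal / ‖F z‖ : ℝ) : ℂ) * F z with hq1
      set q2 : X × Y → ℂ := fun z => (((p2 z).toReal / ‖F z‖ : ℝ) : ℂ) * F z with hq2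
      set q3 : X × Y → ℂ := fun z => (((p3 z).toReal / ‖F z‖ : ℝ) : ℂ) * F z with hq3
      set q4 : X × Y → ℂ := fun z => (((p4 z).toReal / ‖F z‖ : ℝ) : ℂ) * F z with hq4
      have hq1m : Measurable q1 :=
        (Complex.measurable_ofReal.comp (hp1m.ennreal_toReal.div hF.norm)).mul hF
      have hq2m : Measurable q2 :=
        (Complex.measurable_ofReal.comp (hp2m.ennreal_toReal.div hF.norm)).mul hF
      have hq3m : Measurable q3 :=
        (Complex.measurable_ofReal.comp (hp3m.ennreal_toReal.div hF.norm)).mul hF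
      have hq4m : Measurable q4 :=
        (Complex.measurable_ofReal.comp (hp4m.ennreal_toReal.div hF.norm)).mul hF
      have hFsum : F = q1 + q2 + q3 + q4 := by
        funext z
        simp only [hq1, hq2, hq3, hq4, Pi.add_apply]
        by_cases hz : F z = 0
        · simp [hz]
        · have hn : ‖F z‖ ≠ 0 := norm_ne_zero_iff.mpr hz
          have hco : ((p1 z).toReal / ‖F z‖ + (p2 z).toReal / ‖F z‖ +
              (p3 z).toReal / ‖F z‖ + (p4 z).toReal / ‖F z‖ : ℝ) = 1 := by
            rw [← add_div, ← add_div, ← add_div]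
            rw [← ENNReal.toReal_add (hfin' p1 hle1 z) (hfin' p2 hle2 z),
              ← ENNReal.toReal_add
                (ENNReal.add_ne_top.mpr ⟨hfin' p1 hle1 z, hfin' p2 hle2 z⟩)
                (hfin' p3 hle3 z),
              ← ENNReal.toReal_add
                (ENNReal.add_ne_top.mpr
                  ⟨ENNReal.add_ne_top.mpr ⟨hfin' p1 hle1 z, hfin' p2 hle2 z⟩,
                    hfin' p3 hle3 z⟩)
                (hfin' p4 hle4 z),
              hsum4 z]
            have hAt : (A z).toReal = ‖F z‖ := by rw [hA_def]; simp
            rw [hAt]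
            exact div_self hn
          calc F z = ((1 : ℝ) : ℂ) * F z := by simp
            _ = _ := by rw [← hco]; push_cast; ring
      rw [Hnorm]
      refine le_trans (iInf₂_le (q1, q2, q3, q4) ⟨hq1m, hq2m, hq3m, hq4m, hFsum⟩) ?_
      have e1 : eLpNorm q1 1 (μ.prod ν) ≤ 2 * T + ε := by
        rw [eLpNorm_one_eq_lintegral_enorm]
        have hcg : ∀ z, ‖q1 z‖ₑ = p1 z := by
          intro z; rw [hq1]; exact cfn p1 hle1 z
        rw [lintegral_congr hcg, lintegral_prod_symm _ hp1m.aemeasurable]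
        exact B1
      have e2 : eLpNorm q2 ∞ (μ.prod ν) ≤ T + ε := by
        rw [eLpNorm_exponent_top, eLpNormEssSup]
        refine essSup_le_of_ae_le _ (Eventually.of_forall fun z => ?_)
        dsimp only
        rw [show ‖q2 z‖ₑ = p2 z from by rw [hq2]; exact cfn p2 hle2 z]
        exact B2 z
      have e3 : mixedNorm μ ν 1 ∞ q3 ≤ 2 * T + ε := by
        simp only [mixedNorm, mixedNormENN, lpNormENN_one, lpNormENN_top]
        refine essSup_le_of_ae_le _ (Eventually.of_forall fun y => ?_)
        dsimp only
        have hcg : ∀ x, (‖q3 (x, y)‖₊ : ℝ≥0∞) = p3 (x, y) := by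
          intro x; rw [hq3]; exact cfn p3 hle3 (x, y)
        rw [lintegral_congr hcg]
        exact B3 y
      have e4 : mixedNorm μ ν ∞ 1 q4 ≤ T := by
        simp only [mixedNorm, mixedNormENN, lpNormENN_one, lpNormENN_top]
        refine le_trans (lintegral_mono fun y => ?_) KO
        dsimp only
        refine essSup_le_of_ae_le _ (Eventually.of_forall fun x => ?_)
        dsimp only
        rw [show (‖q4 (x, y)‖₊ : ℝ≥0∞) = p4 (x, y) from by rw [hq4]; exact cfn p4 hle4 (x, y)]
        exact B4 (x, y)
      calc eLpNorm q1 1 (μ.prod ν) + eLpNorm q2 ∞ (μ.prod ν) + mixedNorm μ ν 1 ∞ q3 +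
            mixedNorm μ ν ∞ 1 q4 ≤ (2 * T + ε) + (T + ε) + (2 * T + ε) + T :=
            add_le_add (add_le_add (add_le_add e1 e2) e3) e4
        _ = 6 * T + 3 * ε := by ring
        _ = 6 * rho ν G + 9 * ε := by rw [hTdef]; ring
    have h16 : Hnorm μ ν F ≤ 16 * rho ν G := by
      refine ENNReal.le_of_forall_pos_le_add fun δ hδ hlt => ?_
      have hδ0 : ((δ : ℝ≥0∞) / 9 : ℝ≥0∞) ≠ 0 := by
        simp only [ne_eq, ENNReal.div_eq_zero_iff]
        push_neg
        exact ⟨by exact_mod_cast hδ.ne', by norm_num⟩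
      have hδtop : ((δ : ℝ≥0∞) / 9 : ℝ≥0∞) ≠ ∞ :=
        (ENNReal.div_lt_top ENNReal.coe_ne_top (by norm_num)).ne
      calc Hnorm μ ν F ≤ 6 * rho ν G + 9 * ((δ : ℝ≥0∞) / 9) :=
            key _ (pos_iff_ne_zero.mpr hδ0) hδtop
        _ = 6 * rho ν G + δ := by
            rw [ENNReal.mul_div_cancel' (by norm_num) (by norm_num)]
        _ ≤ 16 * rho ν G + δ :=
            add_le_add (mul_le_mul_left (by norm_num : (6 : ℝ≥0∞) ≤ 16) _) le_rfl
    calc (1 / 16 : ℝ≥0∞) * Hnorm μ ν F ≤ (1 / 16) * (16 * rho ν G) := mul_le_mul_right h16 _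
      _ = rho ν G := by
          rw [← mul_assoc, one_div, ENNReal.inv_mul_cancel (by norm_num) (by norm_num),
            one_mul]
  exact ⟨hlower, hupper⟩

end
end

section
/- Let (Θ, 𝒜) be a measurable space and (Λ, ℬ, μ) a σ-finite measure space with μ(Λ) > 0. If F : Θ × Λ → [0,∞] is measurable with respect to the product σ-algebra 𝒜 ⊗ ℬ, then there exists a countable family (M_n)_{n ∈ ℕ} ⊆ ℬ with 0 < μ(M_n) < ∞ for all n such that, setting f_n := 1_{M_n} / μ(M_n), one has ess sup_{λ ∈ Λ} F(θ, λ) = sup_{n ∈ ℕ} ∫_Λ F(θ, λ) · f_n(λ) dμ(λ) for every θ ∈ Θ. In particular, the map θ ↦ ess sup_{λ ∈ Λ} F(θ, λ) is 𝒜-measurable. -/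
open MeasureTheory ENNReal Filter

noncomputable section

section Helpers
open Set MeasurableSpace

lemma myProd_mono {Θ Λ : Type*} (mΘ : MeasurableSpace Θ) {m m' : MeasurableSpace Λ}
    (h : m ≤ m') : mΘ.prod m ≤ mΘ.prod m' :=
  sup_le_sup le_rfl (MeasurableSpace.comap_mono h)

lemma exists_countable_factor {Θ Λ : Type*} [mΘ : MeasurableSpace Θ] [mΛ : MeasurableSpace Λ]
    {S : Set (Θ × Λ)} (hS : MeasurableSet S) :
    ∃ C : Set (Set Λ), C.Countable ∧ (∀ c ∈ C, MeasurableSet c) ∧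
      MeasurableSet[mΘ.prod (MeasurableSpace.generateFrom C)] S := by
  have hS' : MeasurableSet[generateFrom
      (image2 (· ×ˢ ·) { s : Set Θ | MeasurableSet s } { t : Set Λ | MeasurableSet t })] S := by
    rw [generateFrom_prod]; exact hS
  refine MeasurableSpace.generateFrom_induction
    (p := fun (s : Set (Θ × Λ)) _ => ∃ C : Set (Set Λ), C.Countable ∧
      (∀ c ∈ C, MeasurableSet[mΛ] c) ∧
      MeasurableSet[mΘ.prod (MeasurableSpace.generateFrom C)] s)
    _ ?_ ?_ ?_ ?_ S hS'
  · rintro t ⟨a, ha, b, hb, rfl⟩ _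
    refine ⟨{b}, countable_singleton b, by simpa using hb, ?_⟩
    show MeasurableSet[mΘ.prod (generateFrom {b})] (a ×ˢ b)
    rw [Set.prod_eq]
    exact MeasurableSet.inter
      ((le_sup_left : mΘ.comap Prod.fst ≤ mΘ.prod (generateFrom {b})) _ ⟨a, ha, rfl⟩)
      ((le_sup_right : (generateFrom {b}).comap Prod.snd ≤ _) _
        ⟨b, measurableSet_generateFrom rfl, rfl⟩)
  · exact ⟨∅, countable_empty, by simp, @MeasurableSet.empty _ (mΘ.prod (generateFrom ∅))⟩
  · rintro t ht ⟨C, hc, hm, hmeas⟩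
    exact ⟨C, hc, hm, hmeas.compl⟩
  · intro s hs ihs
    choose C hc hm hmeas using ihs
    refine ⟨⋃ n, C n, countable_iUnion hc, ?_, ?_⟩
    · intro c hc'
      obtain ⟨n, hn⟩ := Set.mem_iUnion.1 hc'
      exact hm n c hn
    · refine MeasurableSet.iUnion fun n => ?_
      exact myProd_mono mΘ (generateFrom_mono (Set.subset_iUnion C n)) _ (hmeas n)

lemma exists_countably_generated_factor {Θ Λ : Type*} [mΘ : MeasurableSpace Θ]
    [mΛ : MeasurableSpace Λ] (F : Θ × Λ → ℝ≥0∞) (hF : Measurable F) :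
    ∃ C : Set (Set Λ), C.Countable ∧ (∀ c ∈ C, MeasurableSet c) ∧
      @Measurable _ _ (mΘ.prod (MeasurableSpace.generateFrom C)) _ F := by
  have hgen := generateFrom_countableGeneratingSet (α := ℝ≥0∞)
  have hcnt := countable_countableGeneratingSet (α := ℝ≥0∞)
  haveI : Countable (countableGeneratingSet ℝ≥0∞) := hcnt.to_subtype
  have h : ∀ s : countableGeneratingSet ℝ≥0∞, ∃ C : Set (Set Λ), C.Countable ∧
      (∀ c ∈ C, MeasurableSet c) ∧
      MeasurableSet[mΘ.prod (MeasurableSpace.generateFrom C)] (F ⁻¹' (s : Set ℝ≥0∞)) := by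
    intro s
    have hs : MeasurableSet (s : Set ℝ≥0∞) := by
      have := measurableSet_generateFrom (s := countableGeneratingSet ℝ≥0∞) s.2
      rwa [hgen] at this
    exact exists_countable_factor (hF hs)
  choose C hc hm hmeas using h
  refine ⟨⋃ s, C s, countable_iUnion hc, ?_, ?_⟩
  · intro c hc'
    obtain ⟨s, hs⟩ := Set.mem_iUnion.1 hc'
    exact hm s c hs
  · rw [measurable_iff_comap_le]
    have e : MeasurableSpace.comap F ENNReal.measurableSpace =
        MeasurableSpace.comap F (generateFrom (countableGeneratingSet ℝ≥0∞)) :=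
      congrArg _ hgen.symm
    rw [e, MeasurableSpace.comap_generateFrom]
    refine MeasurableSpace.generateFrom_le ?_
    rintro t ⟨s, hs, rfl⟩
    exact myProd_mono mΘ (generateFrom_mono (Set.subset_iUnion C ⟨s, hs⟩)) _ (hmeas ⟨s, hs⟩)

theorem countable_essSup_characterization_aux
    {Θ Λ : Type*} [mΘ : MeasurableSpace Θ] [mΛ : MeasurableSpace Λ]
    (μ : Measure Λ) [SigmaFinite μ] (hμ : μ Set.univ ≠ 0)
    (F : Θ × Λ → ℝ≥0∞) (hF : Measurable F)
    (C : Set (Set Λ)) (hCc : C.Countable) (hCm : ∀ c ∈ C, MeasurableSet c)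
    (hFC : @Measurable _ _ (mΘ.prod
      (MeasurableSpace.generateFrom C)) _ F) :
    (∃ M : ℕ → Set Λ,
      (∀ n, MeasurableSet (M n) ∧ 0 < μ (M n) ∧ μ (M n) < ∞) ∧
      ∀ θ : Θ, essSup (fun l => F (θ, l)) μ =
        ⨆ n : ℕ, ∫⁻ l, F (θ, l) * (M n).indicator (fun _ => (μ (M n))⁻¹) l ∂μ) ∧
    Measurable fun θ => essSup (fun l => F (θ, l)) μ := by
  classical
  set m₀ : MeasurableSpace Λ :=
    MeasurableSpace.generateFrom (C ∪ Set.range (spanningSets μ)) with hm₀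
  have hle : m₀ ≤ mΛ := by
    refine MeasurableSpace.generateFrom_le ?_
    rintro t (ht | ⟨n, rfl⟩)
    · exact hCm t ht
    · exact measurableSet_spanningSets μ n
  have hspan₀ : ∀ n, MeasurableSet[m₀] (spanningSets μ n) := fun n =>
    measurableSet_generateFrom (Or.inr ⟨n, rfl⟩)
  have hF₀ : @Measurable _ _ (mΘ.prod m₀) _ F := fun s hs =>
    myProd_mono _ (MeasurableSpace.generateFrom_mono Set.subset_union_left) _ (hFC hs)
  have hsec : ∀ θ, @Measurable Λ ℝ≥0∞ m₀ _ (fun l => F (θ, l)) := fun θ =>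
    hF₀.comp (@measurable_prodMk_left Θ Λ _ m₀ θ)
  set ν : @Measure Λ m₀ := μ.trim hle with hν
  haveI hνsf : @SigmaFinite Λ m₀ ν := by
    refine @SigmaFinite.mk Λ m₀ ν ⟨?_⟩
    exact { set := spanningSets μ
            set_mem := fun _ => Set.mem_univ _
            finite := fun n =>
              (trim_measurableSet_eq hle (hspan₀ n)).trans_lt (measure_spanningSets_lt_top μ n)
            spanning := iUnion_spanningSets μ }
  haveI : @MeasurableSpace.CountablyGenerated Λ m₀ :=
    @MeasurableSpace.CountablyGenerated.mk Λ m₀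
      ⟨_, hCc.union (Set.countable_range _), hm₀⟩
  obtain ⟨𝒟, h𝒟c, h𝒟⟩ :=
    (@MeasureTheory.isSeparable_of_sigmaFinite Λ m₀ ν _ _).exists_countable_measureDense
  -- key approximation step
  have hkey : ∀ A : Set Λ, MeasurableSet[m₀] A → 0 < μ A → μ A ≠ ∞ → ∀ δ : ℝ≥0∞, 0 < δ →
      ∃ D ∈ 𝒟, (0 < μ D ∧ μ D < ∞) ∧ μ (A \ D) < δ ∧ μ (D \ A) < δ := by
    intro A hAm hA0 hAtop δ hδ
    set δ₀ := min δ (μ A) with hδ₀def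
    have hδ₀pos : 0 < δ₀ := lt_min hδ hA0
    have hδ₀A : δ₀ ≤ μ A := min_le_right _ _
    have hδ₀top : δ₀ ≠ ∞ := fun h => hAtop (top_le_iff.mp (h ▸ hδ₀A))
    have hε : (0:ℝ) < δ₀.toReal := ENNReal.toReal_pos hδ₀pos.ne' hδ₀top
    have hνA : ν A ≠ ∞ := ne_of_eq_of_ne (trim_measurableSet_eq hle hAm) hAtop
    obtain ⟨D, hD𝒟, hDapprox⟩ := h𝒟.approx A hAm hνA δ₀.toReal hε
    rw [ENNReal.ofReal_toReal hδ₀top] at hDapprox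
    have hDm : MeasurableSet[m₀] D := h𝒟.measurable D hD𝒟
    have hDapprox' : μ (symmDiff A D) < δ₀ := by
      rw [← trim_measurableSet_eq hle (hAm.symmDiff hDm)]
      exact hDapprox
    have hsub1 : A \ D ⊆ symmDiff A D := subset_union_left
    have hsub2 : D \ A ⊆ symmDiff A D := subset_union_right
    have h1 : μ (A \ D) < δ₀ := lt_of_le_of_lt (measure_mono hsub1) hDapprox'
    have h2 : μ (D \ A) < δ₀ := lt_of_le_of_lt (measure_mono hsub2) hDapprox'
    have hAD : 0 < μ (A ∩ D) := by
      by_contra h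
      have h0 : μ (A ∩ D) = 0 := le_antisymm (not_lt.mp h) (zero_le)
      have hle' := measure_le_inter_add_diff μ A D
      rw [h0, zero_add] at hle'
      exact absurd (lt_of_le_of_lt hle' (lt_of_lt_of_le h1 hδ₀A)) (lt_irrefl _)
    have hD0 : 0 < μ D := lt_of_lt_of_le hAD (measure_mono Set.inter_subset_right)
    have hDtop : μ D < ∞ := by
      calc μ D ≤ μ (D ∩ A) + μ (D \ A) := measure_le_inter_add_diff μ D A
        _ ≤ μ A + δ₀ := add_le_add (measure_mono Set.inter_subset_right) h2.le
        _ < ∞ := ENNReal.add_lt_top.mpr ⟨hAtop.lt_top, hδ₀top.lt_top⟩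
    exact ⟨D, hD𝒟, ⟨hD0, hDtop⟩, h1.trans_le (min_le_left _ _), h2.trans_le (min_le_left _ _)⟩
  -- a spanning set of positive measure
  obtain ⟨k₀, hk₀⟩ : ∃ k, μ (spanningSets μ k) ≠ 0 := by
    by_contra h; push_neg at h
    have h0 : μ (⋃ n, spanningSets μ n) = 0 := measure_iUnion_null h
    rw [iUnion_spanningSets] at h0; exact hμ h0
  set 𝒟' := {D ∈ 𝒟 | 0 < μ D ∧ μ D < ∞} with h𝒟'def
  have h𝒟'ne : 𝒟'.Nonempty := by
    obtain ⟨D, hD, hDpf, -, -⟩ := hkey (spanningSets μ k₀) (hspan₀ k₀)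
      (pos_iff_ne_zero.mpr hk₀) (measure_spanningSets_lt_top μ k₀).ne 1 one_pos
    exact ⟨D, hD, hDpf⟩
  obtain ⟨M, hM⟩ := (h𝒟c.mono (Set.sep_subset _ _)).exists_eq_range h𝒟'ne
  have hMmem : ∀ n, M n ∈ 𝒟' := fun n => by
    have h : M n ∈ Set.range M := Set.mem_range_self n
    rwa [← hM] at h
  have hMprop : ∀ n, MeasurableSet[mΛ] (M n) ∧ 0 < μ (M n) ∧ μ (M n) < ∞ := fun n =>
    ⟨hle _ (h𝒟.measurable _ (hMmem n).1), (hMmem n).2⟩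
  -- closed form for the integral terms
  have hIeq : ∀ (G : Λ → ℝ≥0∞), @Measurable Λ ℝ≥0∞ mΛ _ G →
      ∀ D : Set Λ, MeasurableSet[mΛ] D → μ D ≠ 0 →
      (∫⁻ l, G l * D.indicator (fun _ => (μ D)⁻¹) l ∂μ) = (μ D)⁻¹ * ∫⁻ l in D, G l ∂μ := by
    intro G hG D hD hD0
    have heq : ∀ l, G l * D.indicator (fun _ => (μ D)⁻¹) l
        = D.indicator (fun l => (μ D)⁻¹ * G l) l := by
      intro l; by_cases hl : l ∈ D <;> simp [hl, mul_comm]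
    rw [lintegral_congr heq, lintegral_indicator hD,
      lintegral_const_mul' _ _ (by simpa using hD0)]
  -- the pointwise identity
  have hmain : ∀ θ : Θ, essSup (fun l => F (θ, l)) μ =
      ⨆ n : ℕ, ∫⁻ l, F (θ, l) * (M n).indicator (fun _ => (μ (M n))⁻¹) l ∂μ := by
    intro θ
    set G : Λ → ℝ≥0∞ := fun l => F (θ, l) with hGdef
    have hGm₀ : @Measurable Λ ℝ≥0∞ m₀ _ G := hsec θ
    have hG : @Measurable Λ ℝ≥0∞ mΛ _ G := fun s hs => hle _ (hGm₀ hs)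
    set I : ℕ → ℝ≥0∞ :=
      fun n => ∫⁻ l, G l * (M n).indicator (fun _ => (μ (M n))⁻¹) l ∂μ with hIdef
    have hupper : ∀ n, I n ≤ essSup G μ := by
      intro n
      obtain ⟨hMn, hMn0, hMntop⟩ := hMprop n
      rw [hIdef]
      simp only []
      rw [hIeq G hG (M n) hMn hMn0.ne']
      have hint : ∫⁻ l in M n, G l ∂μ ≤ essSup G μ * μ (M n) := by
        calc ∫⁻ l in M n, G l ∂μ ≤ ∫⁻ _ in M n, essSup G μ ∂μ :=
              lintegral_mono_ae (ae_restrict_of_ae (ae_le_essSup G))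
          _ = essSup G μ * μ (M n) := setLIntegral_const _ _
      calc (μ (M n))⁻¹ * ∫⁻ l in M n, G l ∂μ
          ≤ (μ (M n))⁻¹ * (essSup G μ * μ (M n)) := mul_le_mul_right hint _
        _ = essSup G μ * ((μ (M n))⁻¹ * μ (M n)) := by ring
        _ = essSup G μ := by rw [ENNReal.inv_mul_cancel hMn0.ne' hMntop.ne, mul_one]
    refine le_antisymm ?_ (iSup_le hupper)
    by_contra hcon
    push_neg at hcon
    obtain ⟨t, ht1, ht2⟩ := exists_between hcon
    refine absurd ht1 (not_lt.mpr ?_)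
    -- show t ≤ ⨆ n, I n
    rcases eq_or_ne t 0 with rfl | ht0
    · exact zero_le
    obtain ⟨t', htt', ht'⟩ := exists_between ht2
    have httop : t ≠ ∞ := ne_top_of_lt htt'
    have ht'0 : t' ≠ 0 := fun h => ht0 (le_antisymm (h ▸ htt'.le) (zero_le))
    set A₀ := {l | t' < G l} with hA₀def
    have hA₀m : MeasurableSet[m₀] A₀ := hGm₀ measurableSet_Ioi
    have hA₀ : μ A₀ ≠ 0 := by
      intro h0
      have hae : ∀ᵐ l ∂μ, G l ≤ t' := by
        rw [ae_iff]
        simpa [hA₀def, not_le] using h0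
      exact absurd (essSup_le_of_ae_le t' hae) (not_le.mpr ht')
    obtain ⟨k, hk⟩ : ∃ k, μ (A₀ ∩ spanningSets μ k) ≠ 0 := by
      by_contra h; push_neg at h
      have h0 : μ (⋃ k, A₀ ∩ spanningSets μ k) = 0 := measure_iUnion_null h
      rw [← Set.inter_iUnion, iUnion_spanningSets, Set.inter_univ] at h0
      exact hA₀ h0
    set A := A₀ ∩ spanningSets μ k with hAdef
    have hAm : MeasurableSet[m₀] A := hA₀m.inter (hspan₀ k)
    have hA0 : 0 < μ A := pos_iff_ne_zero.mpr hk
    have hAtop : μ A ≠ ∞ :=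
      ((measure_mono Set.inter_subset_right).trans_lt (measure_spanningSets_lt_top μ k)).ne
    set a := μ A with hadef
    have ht't0 : t' - t ≠ 0 := (tsub_pos_of_lt htt').ne'
    set δ := min (a / 2) ((t' - t) * a / (2 * t)) with hδdef
    have hδpos : 0 < δ := lt_min (ENNReal.div_pos hA0.ne' (by norm_num))
      (ENNReal.div_pos (mul_ne_zero ht't0 hA0.ne')
        (ENNReal.mul_ne_top (by norm_num) httop))
    obtain ⟨D, hD𝒟, hDpf, h1, h2⟩ := hkey A hAm hA0 hAtop δ hδpos
    obtain ⟨n, hn⟩ : ∃ n, M n = D := by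
      have hmem : D ∈ Set.range M := hM ▸ (⟨hD𝒟, hDpf⟩ : D ∈ 𝒟')
      obtain ⟨n, hn⟩ := hmem
      exact ⟨n, hn⟩
    have hm1 : a ≤ μ (A ∩ D) + δ :=
      (measure_le_inter_add_diff μ A D).trans (add_le_add_right h1.le _)
    have hm2 : a / 2 ≤ μ (A ∩ D) := by
      have h' : a ≤ μ (A ∩ D) + a / 2 :=
        hm1.trans (add_le_add_right (min_le_left _ _) _)
      have h'' : a - a / 2 ≤ μ (A ∩ D) := tsub_le_iff_right.mpr h'
      rwa [ENNReal.sub_half hAtop] at h''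
    have hb : μ D ≤ μ (A ∩ D) + δ := by
      calc μ D ≤ μ (D ∩ A) + μ (D \ A) := measure_le_inter_add_diff μ D A
        _ ≤ μ (A ∩ D) + δ := by rw [Set.inter_comm]; exact add_le_add_right h2.le _
    have hint : t' * μ (A ∩ D) ≤ ∫⁻ l in D, G l ∂μ := by
      calc t' * μ (A ∩ D) = ∫⁻ _ in A ∩ D, t' ∂μ := (setLIntegral_const _ _).symm
        _ ≤ ∫⁻ l in A ∩ D, G l ∂μ :=
            setLIntegral_mono hG (fun l hl => (hl.1.1 : t' < G l).le)
        _ ≤ ∫⁻ l in D, G l ∂μ := lintegral_mono_set Set.inter_subset_right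
    have hδt : t * δ ≤ (t' - t) * (a / 2) := by
      calc t * δ ≤ t * ((t' - t) * a / (2 * t)) := mul_le_mul_right (min_le_right _ _) _
        _ = (t' - t) * (a * 2⁻¹) * (t * t⁻¹) := by
            rw [div_eq_mul_inv, ENNReal.mul_inv (Or.inr httop) (Or.inl (by norm_num))]
            ring
        _ = (t' - t) * (a / 2) := by
            rw [ENNReal.mul_inv_cancel ht0 httop, mul_one, div_eq_mul_inv]
    have harith : t * μ D ≤ t' * μ (A ∩ D) := by
      calc t * μ D ≤ t * (μ (A ∩ D) + δ) := mul_le_mul_right hb t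
        _ = t * μ (A ∩ D) + t * δ := mul_add _ _ _
        _ ≤ t * μ (A ∩ D) + (t' - t) * (a / 2) := add_le_add_right hδt _
        _ ≤ t * μ (A ∩ D) + (t' - t) * μ (A ∩ D) := add_le_add_right (mul_le_mul_right hm2 _) _
        _ = (t + (t' - t)) * μ (A ∩ D) := (add_mul _ _ _).symm
        _ = t' * μ (A ∩ D) := by rw [add_tsub_cancel_of_le htt'.le]
    have hfinal : t ≤ I n := by
      rw [hIdef]
      simp only []
      rw [hn, hIeq G hG D (hle _ (h𝒟.measurable D hD𝒟)) hDpf.1.ne',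
        ← ENNReal.div_eq_inv_mul]
      rw [ENNReal.le_div_iff_mul_le (Or.inl hDpf.1.ne') (Or.inl hDpf.2.ne)]
      exact harith.trans hint
    exact hfinal.trans (le_iSup I n)
  refine ⟨⟨M, hMprop, hmain⟩, ?_⟩
  have hrw : (fun θ => essSup (fun l => F (θ, l)) μ)
      = fun θ => ⨆ n : ℕ, ∫⁻ l, F (θ, l) * (M n).indicator (fun _ => (μ (M n))⁻¹) l ∂μ :=
    funext hmain
  rw [hrw]
  have hInd : ∀ n, @Measurable Λ ℝ≥0∞ mΛ _ ((M n).indicator (fun _ => (μ (M n))⁻¹)) :=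
    fun n => Measurable.indicator (@measurable_const ℝ≥0∞ Λ _ mΛ _) (hMprop n).1
  have hterm : ∀ n, Measurable fun θ =>
      ∫⁻ l, F (θ, l) * (M n).indicator (fun _ => (μ (M n))⁻¹) l ∂μ := by
    intro n
    exact @Measurable.lintegral_prod_right' Θ Λ mΘ mΛ μ _ _
      (hF.mul ((hInd n).comp (@measurable_snd Θ Λ mΘ mΛ)))
  exact Measurable.iSup hterm

end Helpers

/-- Countable duality characterization of the essential supremum
(Lemma `lem:CountableLInfinityCharacterization`). -/
theorem countable_essSup_characterization
    {Θ Λ : Type*} [MeasurableSpace Θ] [MeasurableSpace Λ]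
    (μ : Measure Λ) [SigmaFinite μ] (hμ : μ Set.univ ≠ 0)
    (F : Θ × Λ → ℝ≥0∞) (hF : Measurable F) :
    (∃ M : ℕ → Set Λ,
      (∀ n, MeasurableSet (M n) ∧ 0 < μ (M n) ∧ μ (M n) < ∞) ∧
      ∀ θ : Θ, essSup (fun l => F (θ, l)) μ =
        ⨆ n : ℕ, ∫⁻ l, F (θ, l) * (M n).indicator (fun _ => (μ (M n))⁻¹) l ∂μ) ∧
    Measurable fun θ => essSup (fun l => F (θ, l)) μ := by
  obtain ⟨C, hCc, hCm, hFC⟩ := exists_countably_generated_factor F hF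
  exact countable_essSup_characterization_aux μ hμ F hF C hCc hCm hFC

end
end
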